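/- Let F be a type, X a fan-set on F, J ⊆ I subsets of F, and u₁, u₂, h₁, h₂ ∈ X with Z(u₁) = Z(u₂) = J, Z(h₁) = Z(h₂) = I, u₁ ⇝ h₁ and u₂ ⇝ h₂. Assume every g ∈ X with g ⇝ h₁ satisfies J ⊆ Z(g) (i.e. h₁ ∈ C^I_J). Let P_i = {g ∈ X | g ⇝ h_i} (i = 1,2) and define φ(g) = g * u₁ * u₂. Then: (a) φ maps P₁ bijectively onto {v ∈ P₂ | J ⊆ Z(v)}; (b) for all g, g' ∈ P₁, g ⇝ g' if and only if φ(g) ⇝ φ(g'); (c) if moreover every g ∈ X with g ⇝ h₂ satisfies J ⊆ Z(g) (i.e. h₂ ∈ C^I_J), then φ is a bijection of P₁ onto P₂ preserving and reflecting the specialization order. -/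
import Mathlib


/-- Zero-set of a `SignType`-valued function. -/
def Zset {F : Type*} (g : F → SignType) : Set F := {a | g a = 0}

/-- `h` is a specialization of `g` (written `g ⇝ h`): `h = h² * g` pointwise. -/
def Spez {F : Type*} (g h : F → SignType) : Prop := h = h ^ 2 * g

/-- A fan-set: a set of `SignType`-valued functions closed under products of
any three of its elements. -/
def IsFanSet {F : Type*} (X : Set (F → SignType)) : Prop :=
  ∀ a ∈ X, ∀ b ∈ X, ∀ c ∈ X, a * b * c ∈ X

private lemma sf1 : ∀ s t : SignType, (s = s ^ 2 * t) ↔ (s = 0 ∨ s = t) := by decide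

private lemma sf2 : ∀ s t x y : SignType, x ≠ 0 → y ≠ 0 →
    ((s * x * y = 0 ∨ s * x * y = t * x * y) ↔ (s = 0 ∨ s = t)) := by decide

private lemma sf3 : ∀ s x y : SignType, x ≠ 0 → y ≠ 0 → s * x * y * x * y = s := by decide

private lemma sf4 : ∀ h k : SignType, h ≠ 0 → h * h * k = k := by decide

private lemma spez_iff {F : Type*} (g h : F → SignType) :
    Spez g h ↔ ∀ a, h a = 0 ∨ h a = g a := by
  unfold Spez
  rw [funext_iff]
  simp only [Pi.mul_apply, Pi.pow_apply]
  exact forall_congr' fun a => sf1 _ _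

theorem embed_predecessor_sets {F : Type*} (X : Set (F → SignType))
    (hX : IsFanSet X) (J I : Set F) (hJI : J ⊆ I)
    (u₁ u₂ h₁ h₂ : F → SignType)
    (hu₁X : u₁ ∈ X) (hu₂X : u₂ ∈ X) (hh₁X : h₁ ∈ X) (hh₂X : h₂ ∈ X)
    (hZu₁ : Zset u₁ = J) (hZu₂ : Zset u₂ = J)
    (hZh₁ : Zset h₁ = I) (hZh₂ : Zset h₂ = I)
    (hs₁ : Spez u₁ h₁) (hs₂ : Spez u₂ h₂)
    (hC₁ : ∀ g ∈ X, Spez g h₁ → J ⊆ Zset g) :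
    Set.BijOn (fun g => g * u₁ * u₂)
      {g | g ∈ X ∧ Spez g h₁}
      {v | (v ∈ X ∧ Spez v h₂) ∧ J ⊆ Zset v} ∧
    (∀ g ∈ {g | g ∈ X ∧ Spez g h₁}, ∀ g' ∈ {g | g ∈ X ∧ Spez g h₁},
      (Spez g g' ↔ Spez (g * u₁ * u₂) (g' * u₁ * u₂))) ∧
    ((∀ g ∈ X, Spez g h₂ → J ⊆ Zset g) →
      Set.BijOn (fun g => g * u₁ * u₂)
        {g | g ∈ X ∧ Spez g h₁} {g | g ∈ X ∧ Spez g h₂}) := by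
  -- basic pointwise membership facts
  have mu₁ : ∀ a, u₁ a = 0 ↔ a ∈ J := fun a => Set.ext_iff.mp hZu₁ a
  have mu₂ : ∀ a, u₂ a = 0 ↔ a ∈ J := fun a => Set.ext_iff.mp hZu₂ a
  have mh₁ : ∀ a, h₁ a = 0 ↔ a ∈ I := fun a => Set.ext_iff.mp hZh₁ a
  have mh₂ : ∀ a, h₂ a = 0 ↔ a ∈ I := fun a => Set.ext_iff.mp hZh₂ a
  have ps₁ := (spez_iff u₁ h₁).mp hs₁
  have ps₂ := (spez_iff u₂ h₂).mp hs₂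
  -- zero on J
  have zeroJ : ∀ (g : F → SignType), ∀ a ∈ J, (g * u₁ * u₂) a = 0 := by
    intro g a ha
    simp only [Pi.mul_apply, (mu₁ a).mpr ha, mul_zero, zero_mul]
  -- forward: image of P₁ lands in target
  have fwd : ∀ g, g ∈ X → Spez g h₁ →
      (g * u₁ * u₂ ∈ X ∧ Spez (g * u₁ * u₂) h₂) ∧ J ⊆ Zset (g * u₁ * u₂) := by
    intro g hgX hgs
    have hJg : J ⊆ Zset g := hC₁ g hgX hgs
    refine ⟨⟨hX g hgX u₁ hu₁X u₂ hu₂X, ?_⟩, fun a ha => zeroJ g a ha⟩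
    rw [spez_iff]
    intro a
    by_cases hI : a ∈ I
    · exact Or.inl ((mh₂ a).mpr hI)
    · right
      have hh₂ : h₂ a ≠ 0 := fun h => hI ((mh₂ a).mp h)
      have hh₁ : h₁ a ≠ 0 := fun h => hI ((mh₁ a).mp h)
      have e₁ : h₁ a = u₁ a := (ps₁ a).resolve_left hh₁
      have e₂ : h₂ a = u₂ a := (ps₂ a).resolve_left hh₂
      have eg : h₁ a = g a := ((spez_iff g h₁).mp hgs a).resolve_left hh₁
      simp only [Pi.mul_apply]
      rw [← eg, ← e₁, ← e₂]
      exact (sf4 (h₁ a) (h₂ a) hh₁).symm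
  -- the map is its own partial inverse
  have invol : ∀ (v : F → SignType), J ⊆ Zset v → (v * u₁ * u₂) * u₁ * u₂ = v := by
    intro v hJv
    funext a
    by_cases hJ : a ∈ J
    · have : v a = 0 := hJv hJ
      simp only [Pi.mul_apply, this, zero_mul]
    · have h1 : u₁ a ≠ 0 := fun h => hJ ((mu₁ a).mp h)
      have h2 : u₂ a ≠ 0 := fun h => hJ ((mu₂ a).mp h)
      simp only [Pi.mul_apply]
      exact sf3 (v a) (u₁ a) (u₂ a) h1 h2
  -- backward: target maps into P₁
  have bwd : ∀ v, v ∈ X → Spez v h₂ → J ⊆ Zset v →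
      (v * u₁ * u₂ ∈ X ∧ Spez (v * u₁ * u₂) h₁) := by
    intro v hvX hvs hJv
    refine ⟨hX v hvX u₁ hu₁X u₂ hu₂X, ?_⟩
    rw [spez_iff]
    intro a
    by_cases hI : a ∈ I
    · exact Or.inl ((mh₁ a).mpr hI)
    · right
      have hh₂ : h₂ a ≠ 0 := fun h => hI ((mh₂ a).mp h)
      have hh₁ : h₁ a ≠ 0 := fun h => hI ((mh₁ a).mp h)
      have e₁ : h₁ a = u₁ a := (ps₁ a).resolve_left hh₁
      have e₂ : h₂ a = u₂ a := (ps₂ a).resolve_left hh₂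
      have ev : h₂ a = v a := ((spez_iff v h₂).mp hvs a).resolve_left hh₂
      simp only [Pi.mul_apply]
      rw [← ev, ← e₁, ← e₂]
      have : h₂ a * h₂ a * h₁ a = h₁ a := sf4 (h₂ a) (h₁ a) hh₂
      rw [mul_right_comm, this]
  have hbij : Set.BijOn (fun g => g * u₁ * u₂)
      {g | g ∈ X ∧ Spez g h₁}
      {v | (v ∈ X ∧ Spez v h₂) ∧ J ⊆ Zset v} := by
    refine ⟨fun g hg => fwd g hg.1 hg.2, ?_, ?_⟩
    · intro g hg g' hg' he
      have i1 := invol g (hC₁ g hg.1 hg.2)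
      have i2 := invol g' (hC₁ g' hg'.1 hg'.2)
      simp only at he
      calc g = (g * u₁ * u₂) * u₁ * u₂ := i1.symm
        _ = (g' * u₁ * u₂) * u₁ * u₂ := by rw [he]
        _ = g' := i2
    · intro v hv
      refine ⟨v * u₁ * u₂, ⟨(bwd v hv.1.1 hv.1.2 hv.2).1, (bwd v hv.1.1 hv.1.2 hv.2).2⟩, ?_⟩
      exact invol v hv.2
  refine ⟨hbij, ?_, ?_⟩
  · intro g hg g' hg'
    have hJg : J ⊆ Zset g := hC₁ g hg.1 hg.2
    have hJg' : J ⊆ Zset g' := hC₁ g' hg'.1 hg'.2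
    rw [spez_iff, spez_iff]
    apply forall_congr'
    intro a
    by_cases hJ : a ∈ J
    · have e : g a = 0 := hJg hJ
      have e' : g' a = 0 := hJg' hJ
      simp only [Pi.mul_apply, e, e', zero_mul, eq_self_iff_true, or_self, true_or,
        or_true, iff_true]
    · have h1 : u₁ a ≠ 0 := fun h => hJ ((mu₁ a).mp h)
      have h2 : u₂ a ≠ 0 := fun h => hJ ((mu₂ a).mp h)
      simp only [Pi.mul_apply]
      exact (sf2 (g' a) (g a) (u₁ a) (u₂ a) h1 h2).symm
  · intro hC₂
    have hset : {v | (v ∈ X ∧ Spez v h₂) ∧ J ⊆ Zset v} = {g | g ∈ X ∧ Spez g h₂} := by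
      ext v
      exact ⟨fun h => h.1, fun h => ⟨h, hC₂ v h.1 h.2⟩⟩
    rw [← hset]
    exact hbij
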